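/- Let Q and S be finite nonempty types, let θ : S × Q → ℝ, and for each q ∈ Q let μ_θ(s|q) = exp(θ_{s,q})/Σ_{s' ∈ S} exp(θ_{s',q}) be the softmax policy. Fix δ' ∈ (0, 1]. Suppose that for each q ∈ Q there are a solution set 𝒮(q) ⊆ S with Σ_{s ∈ 𝒮(q)} μ_θ(s|q) < 1, a hint set h_q ⊆ S with Σ_{s ∈ h_q} μ_θ(s|q) ≥ δ', and an element s_q ∈ h_q ∩ 𝒮(q) with μ_θ(s_q|q) ≥ δ' · Σ_{s ∈ h_q} μ_θ(s|q). For each q, draw N ≥ ln(100·|Q|)/δ' independent samples from the distribution μ_θ(·|q) conditioned on h_q, independently across q. Then with probability at least 0.99 the following holds: for every q the sampled set S_q^{found} = {sampled s : s ∈ 𝒮(q)} is nonempty, and there exists a step size η > 0 such that the parameters θ' defined column-wise by θ'_{s,q} = θ_{s,q} + η · PG_q(s), where PG_q(s) = (1/N) Σ_{i=1}^{N} 1[s_q⁽ⁱ⁾ ∈ 𝒮(q)] · (1[s_q⁽ⁱ⁾ = s] − μ_θ(s|q)) and s_q⁽¹⁾, …, s_q⁽ᴺ⁾ are the samples for question q,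 satisfy Σ_{s ∈ 𝒮(q)} μ_{θ'}(s|q) ≥ 0.99 for every q ∈ Q, and hence E_{q ∼ Uniform(Q)}[ P_{s ∼ μ_{θ'}(·|q)}(s ∈ 𝒮(q)) ] ≥ 0.99. -/

import Mathlib

/-- The empirical policy gradient for question `q` at coordinate `s`, computed from
the samples `ω q 1, …, ω q N` with binary reward `1[sample ∈ Sol q]`:
`PG_q(s) = (1/N) Σᵢ 1[ω q i ∈ Sol q] · (1[ω q i = s] − μ(s|q))`. -/
noncomputable def empiricalPG {Q S : Type*} [Fintype S] [DecidableEq S]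
    (μ : S → Q → ℝ) (Sol : Q → Finset S) (N : ℕ)
    (ω : Q → Fin N → S) (q : Q) (s : S) : ℝ :=
  (1 / (N : ℝ)) * ∑ i : Fin N,
    (if ω q i ∈ Sol q then (1 : ℝ) else 0) *
    ((if ω q i = s then (1 : ℝ) else 0) - μ s q)


open MeasureTheory Finset Set Real

/-- abstract softmax gap bound -/
lemma softmax_gap {S : Type*} [Fintype S] [Nonempty S] [DecidableEq S] (f g : S → ℝ) (Sol : Finset S)
    (a : ℝ) (ha : 0 < a) (hbad : ∀ s ∉ Sol, g s ≤ -a)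
    (sstar : S) (hs : sstar ∈ Sol) (hg : 0 < g sstar) :
    ∃ C > 0, ∃ γ > 0, ∀ η ≥ (0:ℝ),
      1 - C * Real.exp (-(η * γ)) ≤
        (∑ s ∈ Sol, Real.exp (f s + η * g s)) / (∑ s : S, Real.exp (f s + η * g s)) := by
  set T : ℝ := ∑ s : S, Real.exp (f s) with hT
  have hTpos : 0 < T := Finset.sum_pos (fun s _ => Real.exp_pos _) univ_nonempty
  refine ⟨T * Real.exp (-(f sstar)), by positivity, a + g sstar, by linarith, fun η hη => ?_⟩
  set D : ℝ := ∑ s : S, Real.exp (f s + η * g s) with hD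
  have hDpos : 0 < D := Finset.sum_pos (fun s _ => Real.exp_pos _) univ_nonempty
  have hsum : (∑ s ∈ Sol, Real.exp (f s + η * g s))
      + (∑ s ∈ Solᶜ, Real.exp (f s + η * g s)) = D := Finset.sum_add_sum_compl _ _
  have hDbad : (∑ s ∈ Solᶜ, Real.exp (f s + η * g s)) ≤ T * Real.exp (-(η * a)) := by
    calc (∑ s ∈ Solᶜ, Real.exp (f s + η * g s))
        ≤ ∑ s ∈ Solᶜ, Real.exp (f s) * Real.exp (-(η * a)) := by
          refine Finset.sum_le_sum fun s hs' => ?_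
          rw [← Real.exp_add]
          apply Real.exp_le_exp.2
          have := hbad s (Finset.mem_compl.1 hs')
          nlinarith
      _ = (∑ s ∈ Solᶜ, Real.exp (f s)) * Real.exp (-(η * a)) := by
          rw [Finset.sum_mul]
      _ ≤ T * Real.exp (-(η * a)) := by
          apply mul_le_mul_of_nonneg_right _ (Real.exp_pos _).le
          exact Finset.sum_le_sum_of_subset_of_nonneg (Finset.subset_univ _)
            (fun s _ _ => (Real.exp_pos _).le)
  have hDlow : Real.exp (f sstar + η * g sstar) ≤ D :=
    Finset.single_le_sum (f := fun s => Real.exp (f s + η * g s))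
      (fun s _ => (Real.exp_pos _).le) (Finset.mem_univ sstar)
  have key : (∑ s ∈ Solᶜ, Real.exp (f s + η * g s)) / D
      ≤ T * Real.exp (-(f sstar)) * Real.exp (-(η * (a + g sstar))) := by
    have h1 : (∑ s ∈ Solᶜ, Real.exp (f s + η * g s)) / D
        ≤ (T * Real.exp (-(η * a))) / Real.exp (f sstar + η * g sstar) := by
      apply div_le_div₀ (by positivity) hDbad (Real.exp_pos _) hDlow
    refine h1.trans_eq ?_
    rw [div_eq_iff (Real.exp_ne_zero _)]
    rw [mul_assoc, mul_assoc, ← Real.exp_add, ← Real.exp_add]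
    congr 1
    exact congrArg Real.exp (by ring)
  have hratio : (∑ s ∈ Sol, Real.exp (f s + η * g s)) / D
      = 1 - (∑ s ∈ Solᶜ, Real.exp (f s + η * g s)) / D := by
    field_simp
    linarith
  rw [hratio]
  linarith [key]

lemma pg_props {Q S : Type*} [Fintype S] [Nonempty S] [DecidableEq S]
    (μ : S → Q → ℝ) (Sol : Q → Finset S) (N : ℕ) (hN : 0 < N) (ω : Q → Fin N → S) (q : Q)
    (hwit : ∃ i, ω q i ∈ Sol q) (hμpos : ∀ s, 0 < μ s q) (hSolq : ∑ s ∈ Sol q, μ s q < 1) :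
    (∃ sstar ∈ Sol q, 0 < empiricalPG μ Sol N ω q sstar) ∧
    (∃ a > 0, ∀ s ∉ Sol q, empiricalPG μ Sol N ω q s ≤ -a) := by
  classical
  set r : Fin N → ℝ := fun i => if ω q i ∈ Sol q then (1:ℝ) else 0 with hr
  set p : ℝ := (1 / (N:ℝ)) * ∑ i, r i with hp
  have hNpos : (0:ℝ) < (N:ℝ) := by exact_mod_cast hN
  have hrnn : ∀ i, 0 ≤ r i := fun i => by by_cases h : ω q i ∈ Sol q <;> simp [hr, h]
  have hppos : 0 < p := by
    obtain ⟨i₀, hi₀⟩ := hwit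
    have h1 : (1:ℝ) ≤ ∑ i, r i := by
      have := Finset.single_le_sum (f := r) (fun i _ => hrnn i) (Finset.mem_univ i₀)
      simpa [hr, hi₀] using this
    have : 0 < ∑ i, r i := lt_of_lt_of_le one_pos h1
    positivity
  set cc : S → ℝ := fun s => (1 / (N:ℝ)) * ∑ i, r i * (if ω q i = s then (1:ℝ) else 0) with hcc
  have hPG : ∀ s, empiricalPG μ Sol N ω q s = cc s - p * μ s q := by
    intro s
    unfold empiricalPG
    rw [hcc, hp]
    simp only [mul_sub, Finset.sum_sub_distrib, ← Finset.sum_mul]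
    ring
  have hccbad : ∀ s ∉ Sol q, cc s = 0 := by
    intro s hs
    rw [hcc]
    have : ∀ i, r i * (if ω q i = s then (1:ℝ) else 0) = 0 := by
      intro i
      by_cases h1 : ω q i = s
      · have : ω q i ∉ Sol q := h1 ▸ hs
        simp [hr, this]
      · simp [h1]
    simp [this]
  constructor
  · -- existence of positive coordinate in Sol q
    have hsumcc : ∑ s ∈ Sol q, cc s = p := by
      rw [hp]
      simp only [hcc, ← Finset.mul_sum]
      congr 1
      rw [Finset.sum_comm]
      apply Finset.sum_congr rfl
      intro i _
      rw [← Finset.mul_sum, Finset.sum_ite_eq]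
      by_cases h : ω q i ∈ Sol q <;> simp [hr, h]
    have hsumPG : 0 < ∑ s ∈ Sol q, empiricalPG μ Sol N ω q s := by
      have : ∑ s ∈ Sol q, empiricalPG μ Sol N ω q s
          = p - p * ∑ s ∈ Sol q, μ s q := by
        simp only [hPG, Finset.sum_sub_distrib, hsumcc, ← Finset.mul_sum]
      rw [this]
      nlinarith
    by_contra hcon
    push_neg at hcon
    have : ∑ s ∈ Sol q, empiricalPG μ Sol N ω q s ≤ 0 :=
      Finset.sum_nonpos fun s hs => hcon s hs
    linarith
  · -- uniform negativity off Sol q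
    set m : ℝ := Finset.univ.inf' Finset.univ_nonempty (fun s => μ s q) with hm
    have hmpos : 0 < m := by
      rw [hm]
      apply (Finset.lt_inf'_iff _).2
      intro s _
      exact hμpos s
    refine ⟨p * m, by positivity, fun s hs => ?_⟩
    rw [hPG, hccbad s hs]
    have : m ≤ μ s q := Finset.inf'_le _ (Finset.mem_univ s)
    nlinarith

lemma exists_eta {Q S : Type*} [Fintype Q] [Nonempty Q] [Fintype S] [Nonempty S] [DecidableEq S]
    (θ : S × Q → ℝ) (μ : S → Q → ℝ)
    (hμ : ∀ s q, μ s q = Real.exp (θ (s, q)) / ∑ s' : S, Real.exp (θ (s', q)))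
    (Sol : Q → Finset S) (hSol : ∀ q, ∑ s ∈ Sol q, μ s q < 1)
    (N : ℕ) (hN : 0 < N) (ω : Q → Fin N → S) (hω : ∀ q, ∃ i, ω q i ∈ Sol q) :
    ∃ η > (0 : ℝ),
      (∀ q, (∑ s ∈ Sol q,
          Real.exp (θ (s, q) + η * empiricalPG μ Sol N ω q s) /
            ∑ s' : S, Real.exp (θ (s', q) + η * empiricalPG μ Sol N ω q s'))
        ≥ 0.99) ∧
      (1 / (Fintype.card Q : ℝ)) * ∑ q : Q, ∑ s ∈ Sol q,
          Real.exp (θ (s, q) + η * empiricalPG μ Sol N ω q s) /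
            ∑ s' : S, Real.exp (θ (s', q) + η * empiricalPG μ Sol N ω q s')
        ≥ 0.99 := by
  classical
  have hμpos : ∀ s q, 0 < μ s q := by
    intro s q
    rw [hμ]
    exact div_pos (Real.exp_pos _) (Finset.sum_pos (fun s _ => Real.exp_pos _) Finset.univ_nonempty)
  have H : ∀ q : Q, ∃ C > (0:ℝ), ∃ γ > (0:ℝ), ∀ η ≥ (0:ℝ),
      1 - C * Real.exp (-(η * γ)) ≤
        (∑ s ∈ Sol q, Real.exp (θ (s, q) + η * empiricalPG μ Sol N ω q s)) /
          (∑ s' : S, Real.exp (θ (s', q) + η * empiricalPG μ Sol N ω q s')) := by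
    intro q
    obtain ⟨⟨sstar, hsstar, hgpos⟩, a, hapos, hbad⟩ :=
      pg_props μ Sol N hN ω q (hω q) (fun s => hμpos s q) (hSol q)
    exact softmax_gap (fun s => θ (s, q)) (empiricalPG μ Sol N ω q) (Sol q)
      a hapos hbad sstar hsstar hgpos
  choose C hC0 γ hγ0 hb using H
  set η : ℝ := max 1 (Finset.univ.sup' Finset.univ_nonempty
      (fun q => Real.log (100 * C q) / γ q)) with hη
  have hηpos : (0:ℝ) < η := lt_of_lt_of_le one_pos (le_max_left _ _)
  have hmain : ∀ q, (∑ s ∈ Sol q,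
      Real.exp (θ (s, q) + η * empiricalPG μ Sol N ω q s) /
        ∑ s' : S, Real.exp (θ (s', q) + η * empiricalPG μ Sol N ω q s')) ≥ 0.99 := by
    intro q
    have hηq : Real.log (100 * C q) / γ q ≤ η :=
      le_trans (Finset.le_sup' (fun q => Real.log (100 * C q) / γ q) (Finset.mem_univ q))
        (le_max_right _ _)
    have hlog : Real.log (100 * C q) ≤ η * γ q := by
      rw [div_le_iff₀ (hγ0 q)] at hηq
      linarith
    have hCexp : C q * Real.exp (-(η * γ q)) ≤ 1 / 100 := by
      have h1 : Real.exp (-(η * γ q)) ≤ Real.exp (-(Real.log (100 * C q))) :=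
        Real.exp_le_exp.2 (by linarith)
      have h2 : Real.exp (-(Real.log (100 * C q))) = 1 / (100 * C q) := by
        rw [Real.exp_neg, Real.exp_log (mul_pos (by norm_num : (0:ℝ) < 100) (hC0 q))]
        rw [one_div]
      have h3 : C q * Real.exp (-(η * γ q)) ≤ C q * (1 / (100 * C q)) := by
        apply mul_le_mul_of_nonneg_left _ (hC0 q).le
        rw [← h2]; exact h1
      have h4 : C q * (1 / (100 * C q)) = 1 / 100 := by
        rw [mul_one_div]
        rw [div_eq_div_iff (mul_pos (by norm_num : (0:ℝ) < 100) (hC0 q)).ne'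
          (by norm_num : (100:ℝ) ≠ 0)]
        ring
      linarith
    rw [ge_iff_le, ← Finset.sum_div]
    calc (0.99 : ℝ) = 1 - 1/100 := by norm_num
      _ ≤ 1 - C q * Real.exp (-(η * γ q)) := by linarith
      _ ≤ _ := hb q η hηpos.le
  refine ⟨η, hηpos, hmain, ?_⟩
  have hcard : (0:ℝ) < (Fintype.card Q : ℝ) := by exact_mod_cast Fintype.card_pos
  have hsum : (Fintype.card Q : ℝ) * 0.99 ≤ ∑ q : Q, ∑ s ∈ Sol q,
      Real.exp (θ (s, q) + η * empiricalPG μ Sol N ω q s) /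
        ∑ s' : S, Real.exp (θ (s', q) + η * empiricalPG μ Sol N ω q s') := by
    calc (Fintype.card Q : ℝ) * 0.99 = ∑ _q : Q, (0.99:ℝ) := by
          rw [Finset.sum_const, Finset.card_univ, nsmul_eq_mul]
      _ ≤ _ := Finset.sum_le_sum fun q _ => hmain q
  have heq : (1 / (Fintype.card Q : ℝ)) * ((Fintype.card Q : ℝ) * 0.99) = 0.99 := by
    field_simp
  calc (0.99:ℝ) = (1 / (Fintype.card Q : ℝ)) * ((Fintype.card Q : ℝ) * 0.99) := heq.symm
    _ ≤ _ := mul_le_mul_of_nonneg_left hsum (by positivity)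


lemma discrete_bound {Q S : Type*} [Fintype Q] [Nonempty Q] [Fintype S] [DecidableEq S]
    [MeasurableSpace S] [MeasurableSingletonClass S]
    (Sol : Q → Finset S) (ν : Q → PMF S) (sq : Q → S) (hsq : ∀ q, sq q ∈ Sol q)
    (δ' : ℝ) (hδ0 : 0 < δ') (hδ1 : δ' ≤ 1)
    (hlow : ∀ q, ENNReal.ofReal δ' ≤ ν q (sq q))
    (N : ℕ) (hN : (N : ℝ) ≥ Real.log (100 * (Fintype.card Q : ℝ)) / δ') :
    ENNReal.ofReal 0.99 ≤
      (MeasureTheory.Measure.pi fun q : Q =>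
        MeasureTheory.Measure.pi fun _ : Fin N => (ν q).toMeasure)
      {ω : Q → Fin N → S | ∀ q, ∃ i, ω q i ∈ Sol q} := by
  classical
  set κ : Q → Measure (Fin N → S) :=
    fun q => MeasureTheory.Measure.pi fun _ : Fin N => (ν q).toMeasure with hκ
  set pm : Measure (Q → Fin N → S) := MeasureTheory.Measure.pi κ with hpm
  have hSolMeas : ∀ q, MeasurableSet (↑(Sol q) : Set S) := fun q => (Sol q).measurableSet
  set E : Set (Q → Fin N → S) := {ω | ∀ q, ∃ i, ω q i ∈ Sol q} with hE
  have hEmeas : MeasurableSet E := by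
    have : E = ⋂ q, ⋃ i, (fun ω : Q → Fin N → S => ω q i) ⁻¹' ↑(Sol q) := by
      ext ω; simp [hE]
    rw [this]
    exact MeasurableSet.iInter fun q => MeasurableSet.iUnion fun i =>
      (((measurable_pi_apply i).comp (measurable_pi_apply q))) (hSolMeas q)
  have hEc : Eᶜ = ⋃ q, Function.eval q ⁻¹'
      (Set.pi Set.univ fun _ : Fin N => (↑(Sol q) : Set S)ᶜ) := by
    ext ω
    simp [hE, Function.eval, Set.mem_pi]
  -- the per-question failure probability
  have hfail : ∀ q, pm (Function.eval q ⁻¹'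
      (Set.pi Set.univ fun _ : Fin N => (↑(Sol q) : Set S)ᶜ))
      ≤ (1 - ENNReal.ofReal δ') ^ N := by
    intro q
    rw [Set.eval_preimage, hpm, Measure.pi_pi]
    have hother : ∀ q' ≠ q, κ q' (Function.update (fun _ : Q => Set.univ) q
        (Set.pi Set.univ fun _ : Fin N => (↑(Sol q) : Set S)ᶜ) q') = 1 := by
      intro q' hq'
      rw [Function.update_of_ne hq']
      exact measure_univ
    rw [Finset.prod_eq_single q (fun q' _ hq' => hother q' hq') (by simp)]
    rw [Function.update_self, hκ, Measure.pi_pi, Finset.prod_const, Finset.card_univ,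
      Fintype.card_fin]
    apply pow_le_pow_left' _ N
    have h1 : (ν q).toMeasure (↑(Sol q) : Set S)ᶜ = 1 - (ν q).toMeasure ↑(Sol q) := by
      rw [← prob_compl_eq_one_sub (hSolMeas q)]
    rw [h1]
    apply tsub_le_tsub_left
    calc ENNReal.ofReal δ' ≤ ν q (sq q) := hlow q
      _ ≤ (ν q).toMeasure ↑(Sol q) := by
          rw [PMF.toMeasure_apply _ (hSolMeas q)]
          have := ENNReal.le_tsum (f := fun s => Set.indicator (↑(Sol q)) (ν q) s) (sq q)
          rwa [Set.indicator_of_mem (by exact_mod_cast hsq q)] at this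
  have hEcbound : pm Eᶜ ≤ (Fintype.card Q : ENNReal) * (1 - ENNReal.ofReal δ') ^ N := by
    rw [hEc]
    calc pm (⋃ q, _) ≤ ∑' q, pm (Function.eval q ⁻¹'
          (Set.pi Set.univ fun _ : Fin N => (↑(Sol q) : Set S)ᶜ)) := measure_iUnion_le _
      _ ≤ ∑' _q : Q, (1 - ENNReal.ofReal δ') ^ N := ENNReal.tsum_le_tsum hfail
      _ = (Fintype.card Q : ENNReal) * (1 - ENNReal.ofReal δ') ^ N := by
          rw [tsum_fintype, Finset.sum_const, Finset.card_univ, nsmul_eq_mul]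
  -- real-number estimate
  have hcard1 : (1:ℝ) ≤ (Fintype.card Q : ℝ) := by exact_mod_cast Fintype.card_pos
  have hreal : (Fintype.card Q : ℝ) * (1 - δ') ^ N ≤ 1 / 100 := by
    have hlog : Real.log (100 * (Fintype.card Q : ℝ)) ≤ δ' * N := by
      rw [ge_iff_le, div_le_iff₀ hδ0] at hN
      linarith
    have h2 : (1 - δ') ^ N ≤ Real.exp (-δ') ^ N :=
      pow_le_pow_left₀ (by linarith) (by linarith [Real.add_one_le_exp (-δ')]) N
    have h3 : Real.exp (-δ') ^ N = Real.exp ((N : ℝ) * (-δ')) := (Real.exp_nat_mul _ N).symm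
    have h4 : Real.exp ((N : ℝ) * (-δ')) ≤ Real.exp (-(Real.log (100 * (Fintype.card Q : ℝ)))) :=
      Real.exp_le_exp.2 (by nlinarith)
    have h5 : Real.exp (-(Real.log (100 * (Fintype.card Q : ℝ))))
        = 1 / (100 * (Fintype.card Q : ℝ)) := by
      rw [Real.exp_neg, Real.exp_log (by nlinarith), one_div]
    have h6 : (1 - δ') ^ N ≤ 1 / (100 * (Fintype.card Q : ℝ)) := by linarith
    have h7 : (Fintype.card Q : ℝ) * ((1 - δ') ^ N)
        ≤ (Fintype.card Q : ℝ) * (1 / (100 * (Fintype.card Q : ℝ))) :=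
      mul_le_mul_of_nonneg_left h6 (by linarith)
    have h8 : (Fintype.card Q : ℝ) * (1 / (100 * (Fintype.card Q : ℝ))) = 1 / 100 := by
      rw [mul_one_div, div_eq_div_iff (by nlinarith : (100 * (Fintype.card Q : ℝ)) ≠ 0)
        (by norm_num : (100:ℝ) ≠ 0)]
      ring
    linarith
  have hEcR : pm Eᶜ ≤ ENNReal.ofReal (1 / 100) := by
    calc pm Eᶜ ≤ (Fintype.card Q : ENNReal) * (1 - ENNReal.ofReal δ') ^ N := hEcbound
      _ = ENNReal.ofReal ((Fintype.card Q : ℝ) * (1 - δ') ^ N) := by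
          rw [← ENNReal.ofReal_one, ← ENNReal.ofReal_sub _ hδ0.le,
            ← ENNReal.ofReal_pow (by linarith), ENNReal.ofReal_mul (by positivity)]
          · rw [ENNReal.ofReal_natCast]
      _ ≤ ENNReal.ofReal (1 / 100) := ENNReal.ofReal_le_ofReal hreal
  have hfinal : pm E = 1 - pm Eᶜ := by
    rw [← prob_compl_eq_one_sub hEmeas.compl, compl_compl]
  rw [hfinal]
  calc ENNReal.ofReal 0.99 ≤ 1 - ENNReal.ofReal (1/100) := by
        rw [← ENNReal.ofReal_one, ← ENNReal.ofReal_sub _ (by norm_num)]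
        exact ENNReal.ofReal_le_ofReal (by norm_num)
    _ ≤ 1 - pm Eᶜ := tsub_le_tsub_left hEcR _

lemma pi_le_pi {ι : Type*} {α : ι → Type*} (m₁ m₂ : ∀ i, MeasurableSpace (α i))
    (hle : ∀ i, m₁ i ≤ m₂ i) :
    (@MeasurableSpace.pi ι α m₁) ≤ (@MeasurableSpace.pi ι α m₂) :=
  iSup_mono fun i => MeasurableSpace.comap_mono (hle i)

lemma pi_trim {ι : Type*} [Fintype ι] {α : ι → Type*}
    (m₁ m₂ : ∀ i, MeasurableSpace (α i)) (hle : ∀ i, m₁ i ≤ m₂ i)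
    (μ₁ : ∀ i, @Measure (α i) (m₁ i)) (μ₂ : ∀ i, @Measure (α i) (m₂ i))
    (hp₁ : ∀ i, @IsProbabilityMeasure (α i) (m₁ i) (μ₁ i))
    (hp₂ : ∀ i, @IsProbabilityMeasure (α i) (m₂ i) (μ₂ i))
    (hagree : ∀ i (A : Set (α i)), MeasurableSet[m₁ i] A → μ₁ i A = μ₂ i A) :
    @Measure.pi ι α _ m₁ μ₁ =
      (@Measure.pi ι α _ m₂ μ₂).trim (pi_le_pi m₁ m₂ hle) := by
  haveI : ∀ i, SigmaFinite (μ₁ i) := fun i => by haveI := hp₁ i; infer_instance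
  haveI : ∀ i, SigmaFinite (μ₂ i) := fun i => by haveI := hp₂ i; infer_instance
  refine @Measure.pi_eq ι α _ m₁ μ₁ ‹∀ i, SigmaFinite (μ₁ i)› _ (fun s hs => ?_)
  have hmeas : MeasurableSet[@MeasurableSpace.pi ι α m₁] (Set.pi Set.univ s) := by
    exact @MeasurableSet.univ_pi ι α m₁ _ s (fun i => hs i)
  rw [trim_measurableSet_eq (pi_le_pi m₁ m₂ hle) hmeas]
  rw [Measure.pi_pi]
  exact Finset.prod_congr rfl fun i _ => (hagree i _ (hs i)).symm

lemma pmf_toMeasure_congr {S : Type*} (mS : MeasurableSpace S) (p : PMF S) (A : Set S)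
    (hA : MeasurableSet[mS] A) :
    @PMF.toMeasure S mS p A = @PMF.toMeasure S ⊤ p A := by
  rw [@PMF.toMeasure_apply S mS p A hA,
    @PMF.toMeasure_apply S ⊤ p A (by exact MeasurableSpace.measurableSet_top)]

/-- Theorem B.3, formal Upper Bound on RL Learnability with Hint.
Tabular RL with softmax policy `μ_θ(s|q) = exp(θ_{s,q})/Σ_{s'} exp(θ_{s',q})`; each
question `q` has a solution set `𝒮(q)` of policy mass `< 1`, a hint set `h_q` of mass
`≥ δ'` containing a solution `s_q ∈ h_q ∩ 𝒮(q)` with `μ_θ(s_q|q) ≥ δ'·μ_θ(h_q|q)`.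
Drawing `N ≥ ln(100·|Q|)/δ'` i.i.d. samples per question from the hint-conditioned
policy (independently across questions), with probability at least `0.99`: every
question has a sampled solution, and a single policy-gradient step
`θ' = θ + η·PG` with some step size `η > 0` puts mass `≥ 0.99` on `𝒮(q)` for every
`q`, whence `E_{q∼Uniform(Q)}[P_{s∼μ_{θ'}(·|q)}(s ∈ 𝒮(q))] ≥ 0.99`. -/
theorem rl_upper_bound_with_hint
    (Q S : Type*) [Fintype Q] [Nonempty Q]
    [Fintype S] [Nonempty S] [DecidableEq S] [MeasurableSpace S]
    (θ : S × Q → ℝ)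
    (μ : S → Q → ℝ)
    (hμ : ∀ s q, μ s q = Real.exp (θ (s, q)) / ∑ s' : S, Real.exp (θ (s', q)))
    (δ' : ℝ) (hδ0 : 0 < δ') (hδ1 : δ' ≤ 1)
    (Sol hint : Q → Finset S)
    (hSol : ∀ q, ∑ s ∈ Sol q, μ s q < 1)
    (hhintMass : ∀ q, δ' ≤ ∑ s ∈ hint q, μ s q)
    (sq : Q → S) (hsq : ∀ q, sq q ∈ hint q ∩ Sol q)
    (hsqMass : ∀ q, μ (sq q) q ≥ δ' * ∑ s ∈ hint q, μ s q)
    (ν : Q → PMF S)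
    (hν : ∀ q s, ((ν q) s).toReal =
      if s ∈ hint q then μ s q / ∑ s' ∈ hint q, μ s' q else 0)
    (N : ℕ)
    (hN : (N : ℝ) ≥ Real.log (100 * (Fintype.card Q : ℝ)) / δ') :
    ((MeasureTheory.Measure.pi fun q : Q =>
        MeasureTheory.Measure.pi fun _ : Fin N => (ν q).toMeasure)
      {ω : Q → Fin N → S |
        (∀ q, ∃ i, ω q i ∈ Sol q) ∧
        ∃ η > (0 : ℝ),
          (∀ q, (∑ s ∈ Sol q,
              Real.exp (θ (s, q) + η * empiricalPG μ Sol N ω q s) /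
                ∑ s' : S, Real.exp (θ (s', q) + η * empiricalPG μ Sol N ω q s'))
            ≥ 0.99) ∧
          (1 / (Fintype.card Q : ℝ)) * ∑ q : Q, ∑ s ∈ Sol q,
              Real.exp (θ (s, q) + η * empiricalPG μ Sol N ω q s) /
                ∑ s' : S, Real.exp (θ (s', q) + η * empiricalPG μ Sol N ω q s')
            ≥ 0.99}).toReal ≥ 0.99 := by
  classical
  have hQc : (1:ℝ) ≤ (Fintype.card Q : ℝ) := by exact_mod_cast Fintype.card_pos
  have hlogpos : 0 < Real.log (100 * (Fintype.card Q : ℝ)) := Real.log_pos (by nlinarith)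
  have hNpos : 0 < N := by
    by_contra h
    push_neg at h
    interval_cases N
    have : (0:ℝ) ≥ Real.log (100 * (Fintype.card Q : ℝ)) / δ' := by exact_mod_cast hN
    have : 0 < Real.log (100 * (Fintype.card Q : ℝ)) / δ' := div_pos hlogpos hδ0
    linarith
  -- lower bound on the hinted PMF at the designated solution
  have hlow : ∀ q, ENNReal.ofReal δ' ≤ ν q (sq q) := by
    intro q
    have hhintpos : 0 < ∑ s ∈ hint q, μ s q := lt_of_lt_of_le hδ0 (hhintMass q)
    have hsqhint : sq q ∈ hint q := (Finset.mem_inter.1 (hsq q)).1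
    have htoReal : ((ν q) (sq q)).toReal = μ (sq q) q / ∑ s' ∈ hint q, μ s' q := by
      rw [hν q (sq q), if_pos hsqhint]
    have hdr : δ' ≤ ((ν q) (sq q)).toReal := by
      rw [htoReal, le_div_iff₀ hhintpos]
      have := hsqMass q
      nlinarith
    exact ENNReal.ofReal_le_of_le_toReal hdr
  have hsqSol : ∀ q, sq q ∈ Sol q := fun q => (Finset.mem_inter.1 (hsq q)).2
  -- discrete (⊤ σ-algebra) versions of the measures
  haveI hMSC : @MeasurableSingletonClass S ⊤ := @MeasurableSingletonClass.mk S ⊤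
    (fun _ => MeasurableSpace.measurableSet_top)
  set κd : Q → @Measure (Fin N → S) (@MeasurableSpace.pi (Fin N) (fun _ => S) (fun _ => ⊤)) :=
    fun q => @Measure.pi (Fin N) (fun _ => S) _ (fun _ => (⊤ : MeasurableSpace S))
      (fun _ => @PMF.toMeasure S ⊤ (ν q)) with hκd
  have hpd : ∀ q, @IsProbabilityMeasure _ _ (κd q) := fun q => by
    haveI : ∀ _i : Fin N, IsProbabilityMeasure (@PMF.toMeasure S ⊤ (ν q)) :=
      fun _ => @PMF.toMeasure.isProbabilityMeasure S ⊤ (ν q)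
    exact @MeasureTheory.Measure.pi.instIsProbabilityMeasure (Fin N) (fun _ => S) _
      (fun _ => (⊤ : MeasurableSpace S)) (fun _ => @PMF.toMeasure S ⊤ (ν q))
      this
  set Pd : @Measure (Q → Fin N → S)
      (@MeasurableSpace.pi Q (fun _ => Fin N → S)
        (fun _ => @MeasurableSpace.pi (Fin N) (fun _ => S) (fun _ => ⊤))) :=
    @Measure.pi Q (fun _ => Fin N → S) _
      (fun _ => @MeasurableSpace.pi (Fin N) (fun _ => S) (fun _ => ⊤)) κd with hPd
  have hle1 : @MeasurableSpace.pi (Fin N) (fun _ => S) (fun _ => (inferInstance : MeasurableSpace S)) ≤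
      @MeasurableSpace.pi (Fin N) (fun _ => S) (fun _ => ⊤) :=
    pi_le_pi (fun _ => (inferInstance : MeasurableSpace S)) (fun _ => ⊤) (fun _ => le_top)
  have hle2 : @MeasurableSpace.pi Q (fun _ => Fin N → S)
        (fun _ => @MeasurableSpace.pi (Fin N) (fun _ => S) (fun _ => (inferInstance : MeasurableSpace S))) ≤
      @MeasurableSpace.pi Q (fun _ => Fin N → S)
        (fun _ => @MeasurableSpace.pi (Fin N) (fun _ => S) (fun _ => ⊤)) :=
    pi_le_pi _ _ (fun _ => hle1)
  -- level-1 trim: inner pi measures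
  have step1 : ∀ q, (MeasureTheory.Measure.pi fun _ : Fin N => (ν q).toMeasure)
      = (κd q).trim hle1 := fun q =>
    pi_trim (fun _ => (inferInstance : MeasurableSpace S)) (fun _ => (⊤ : MeasurableSpace S)) (fun _ => le_top)
      (fun _ => (ν q).toMeasure) (fun _ => @PMF.toMeasure S ⊤ (ν q))
      (fun _ => inferInstance) (fun _ => @PMF.toMeasure.isProbabilityMeasure S ⊤ (ν q))
      (fun _ A hA => pmf_toMeasure_congr (inferInstance : MeasurableSpace S) (ν q) A hA)
  -- level-2 trim: outer pi measure
  have step2 : (MeasureTheory.Measure.pi fun q : Q =>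
        MeasureTheory.Measure.pi fun _ : Fin N => (ν q).toMeasure)
      = Pd.trim hle2 :=
    pi_trim (fun _ => @MeasurableSpace.pi (Fin N) (fun _ => S) (fun _ => (inferInstance : MeasurableSpace S)))
      (fun _ => @MeasurableSpace.pi (Fin N) (fun _ => S) (fun _ => ⊤))
      (fun _ => hle1)
      (fun q => MeasureTheory.Measure.pi fun _ : Fin N => (ν q).toMeasure) κd
      (fun q => inferInstance) hpd
      (fun q A hA => by
        show (MeasureTheory.Measure.pi fun _ : Fin N => (ν q).toMeasure) A = (κd q) A
        rw [step1 q]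
        exact trim_measurableSet_eq hle1 hA)
  haveI hPdprob : @IsProbabilityMeasure _ _ Pd :=
    @MeasureTheory.Measure.pi.instIsProbabilityMeasure Q (fun _ => Fin N → S) _
      (fun _ => @MeasurableSpace.pi (Fin N) (fun _ => S) (fun _ => ⊤)) κd
      hpd
  -- the key inclusion: sampling a solution for every question suffices
  have hEsub : {ω : Q → Fin N → S | ∀ q, ∃ i, ω q i ∈ Sol q} ⊆
      {ω : Q → Fin N → S |
        (∀ q, ∃ i, ω q i ∈ Sol q) ∧
        ∃ η > (0 : ℝ),
          (∀ q, (∑ s ∈ Sol q,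
              Real.exp (θ (s, q) + η * empiricalPG μ Sol N ω q s) /
                ∑ s' : S, Real.exp (θ (s', q) + η * empiricalPG μ Sol N ω q s'))
            ≥ 0.99) ∧
          (1 / (Fintype.card Q : ℝ)) * ∑ q : Q, ∑ s ∈ Sol q,
              Real.exp (θ (s, q) + η * empiricalPG μ Sol N ω q s) /
                ∑ s' : S, Real.exp (θ (s', q) + η * empiricalPG μ Sol N ω q s')
            ≥ 0.99} := by
    intro ω hω
    exact ⟨hω, exists_eta θ μ hμ Sol hSol N hNpos ω hω⟩
  have hdisc : ENNReal.ofReal 0.99 ≤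
      Pd {ω : Q → Fin N → S | ∀ q, ∃ i, ω q i ∈ Sol q} :=
    @discrete_bound Q S _ _ _ _ ⊤ hMSC Sol ν sq hsqSol δ' hδ0 hδ1 hlow N hN
  rw [step2]
  set ev := {ω : Q → Fin N → S |
        (∀ q, ∃ i, ω q i ∈ Sol q) ∧
        ∃ η > (0 : ℝ),
          (∀ q, (∑ s ∈ Sol q,
              Real.exp (θ (s, q) + η * empiricalPG μ Sol N ω q s) /
                ∑ s' : S, Real.exp (θ (s', q) + η * empiricalPG μ Sol N ω q s'))
            ≥ 0.99) ∧
          (1 / (Fintype.card Q : ℝ)) * ∑ q : Q, ∑ s ∈ Sol q,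
              Real.exp (θ (s, q) + η * empiricalPG μ Sol N ω q s) /
                ∑ s' : S, Real.exp (θ (s', q) + η * empiricalPG μ Sol N ω q s')
            ≥ 0.99} with hev
  have hchain : ENNReal.ofReal 0.99 ≤
      (Pd.trim hle2) ev :=
    le_trans hdisc (le_trans (measure_mono hEsub) (le_trim _))
  have hfin : (Pd.trim hle2) ev ≤ 1 := by
    calc _ ≤ (Pd.trim hle2) Set.univ :=
        measure_mono (Set.subset_univ _)
      _ = Pd Set.univ := trim_measurableSet_eq _ MeasurableSet.univ
      _ = 1 := measure_univ
  have hne : (Pd.trim hle2) ev ≠ ⊤ :=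
    ne_top_of_le_ne_top ENNReal.one_ne_top hfin
  exact (ENNReal.ofReal_le_iff_le_toReal hne).1 hchain
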